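/- Let F be a finite field of odd cardinality, V ∈ Sym_{n-r}(F) representing a quadratic space Ω₁ of dimension n−r, and let a ≤ j' ≤ n−r. Then for every congruence class of U ∈ Sym_a(F), β(n−r−a, j'−a)·R*(V,U) = Σ_{cls V' ∈ Sym_{j'}(F)} R*(V,V')·R*(V',U), where R*(·,·) counts full-rank representations divided by the order of the isometry group of the represented form, and β is the Gaussian binomial. (Counting flags Λ₁ ⊆ Ω₁' ⊆ Ω₁ with dim Λ₁ = a, dim Ω₁' = j', two ways.) -/

import Mathlib

open Matrix

/-- The Gaussian binomial `β(r,a) = Π_{i=0}^{a-1} (q^{r-i} − 1)/(q^{a-i} − 1)`. -/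
noncomputable def gaussBinom (q r a : ℕ) : ℚ :=
  ∏ i ∈ Finset.range a, (((q : ℚ) ^ (r - i) - 1) / ((q : ℚ) ^ (a - i) - 1))

/-- `r*(V,U)`: the number of full-column-rank matrices `C` with `ᵗC V C = U`. -/
noncomputable def rstar {F : Type*} [Field F] [Fintype F] [DecidableEq F] {r a : ℕ}
    (V : Matrix (Fin r) (Fin r) F) (U : Matrix (Fin a) (Fin a) F) : ℕ :=
  Nat.card {C : Matrix (Fin r) (Fin a) F // Cᵀ * V * C = U ∧ C.rank = a}

/-- `R*(V,U) = r*(V,U)/|O(U)|`. -/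
noncomputable def Rstar {F : Type*} [Field F] [Fintype F] [DecidableEq F] {r a : ℕ}
    (V : Matrix (Fin r) (Fin r) F) (U : Matrix (Fin a) (Fin a) F) : ℚ :=
  (rstar V U : ℚ) /
    (Nat.card {G : GL (Fin a) F //
      (G : Matrix (Fin a) (Fin a) F)ᵀ * U * (G : Matrix (Fin a) (Fin a) F) = U} : ℚ)

set_option linter.unusedSectionVars false
set_option maxHeartbeats 1600000

section FlagAux

lemma nat_card_sigma' {ι : Type*} [Fintype ι] (α : ι → Type*) [∀ i, Finite (α i)] :
    Nat.card ((i : ι) × α i) = ∑ i, Nat.card (α i) := by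
  letI := fun i => Fintype.ofFinite (α i)
  simp only [Nat.card_eq_fintype_card]
  exact Fintype.card_sigma

lemma nat_card_eq_sum_fibers {α β : Type*} [Finite α] [Fintype β] (f : α → β) :
    Nat.card α = ∑ b, Nat.card {x // f x = b} := by
  rw [← nat_card_sigma']
  exact Nat.card_congr (Equiv.sigmaFiberEquiv f).symm

lemma nat_card_eq_mul_of_fiber {α β : Type*} [Finite α] [Finite β] (f : α → β) (o : ℕ)
    (h : ∀ b, Nat.card {x // f x = b} = o) : Nat.card α = Nat.card β * o := by
  letI := Fintype.ofFinite β
  rw [nat_card_eq_sum_fibers f]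
  simp [h, Nat.card_eq_fintype_card, Finset.sum_const, mul_comm]

instance finiteSubmodule {F M : Type*} [Field F] [AddCommGroup M] [Module F M] [Finite M] :
    Finite (Submodule F M) :=
  Finite.of_injective (fun W => (W : Set M)) SetLike.coe_injective



variable {F : Type*} [Field F] [Fintype F] [DecidableEq F]


lemma mulVecLin_matrix_inj {m k : ℕ} : Function.Injective (Matrix.mulVecLin : Matrix (Fin m) (Fin k) F → _) := by
  intro C C' h
  ext i j
  have := congrArg (fun f => f (Pi.single j 1) i) h
  simpa [Matrix.mulVecLin_apply, Matrix.mulVec_single_one] using this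

lemma rank_mul_of_inj {m k a : ℕ} (C : Matrix (Fin m) (Fin k) F) (D : Matrix (Fin k) (Fin a) F)
    (hC : Function.Injective C.mulVecLin) : (C * D).rank = D.rank := by
  rw [Matrix.rank, Matrix.rank, Matrix.mulVecLin_mul, LinearMap.range_comp]
  exact ((Submodule.equivMapOfInjective _ hC _).symm.finrank_eq)

lemma left_cancel {m k a : ℕ} {C : Matrix (Fin m) (Fin k) F} {D D' : Matrix (Fin k) (Fin a) F}
    (hC : Function.Injective C.mulVecLin) (h : C * D = C * D') : D = D' := by
  apply mulVecLin_matrix_inj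
  have : C.mulVecLin.comp D.mulVecLin = C.mulVecLin.comp D'.mulVecLin := by
    rw [← Matrix.mulVecLin_mul, ← Matrix.mulVecLin_mul, h]
  exact LinearMap.ext fun x => hC (LinearMap.congr_fun this x)

lemma exists_factor {m k a : ℕ} (C : Matrix (Fin m) (Fin k) F) (B : Matrix (Fin m) (Fin a) F)
    (h : LinearMap.range B.mulVecLin ≤ LinearMap.range C.mulVecLin) : ∃ D : Matrix (Fin k) (Fin a) F, C * D = B := by
  have hcol : ∀ j, ∃ x, C.mulVec x = Bᵀ j := by
    intro j
    have : Bᵀ j ∈ LinearMap.range B.mulVecLin := by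
      exact ⟨Pi.single j 1, by
        simp only [Matrix.mulVecLin_apply, Matrix.mulVec_single_one]; rfl⟩
    exact h this
  choose x hx using hcol
  refine ⟨Matrix.of (fun i j => x j i), ?_⟩
  ext i j
  have := congrFun (hx j) i
  simp only [Matrix.mulVec, dotProduct] at this
  simpa [Matrix.mul_apply, Matrix.mulVec, dotProduct] using this

lemma range_mul_GL {m k : ℕ} (C : Matrix (Fin m) (Fin k) F) (g : GL (Fin k) F) :
    LinearMap.range (C * (g : Matrix (Fin k) (Fin k) F)).mulVecLin = LinearMap.range C.mulVecLin := by
  rw [Matrix.mulVecLin_mul, LinearMap.range_comp]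
  have : LinearMap.range ((g : Matrix (Fin k) (Fin k) F)).mulVecLin = ⊤ := by
    rw [LinearMap.range_eq_top]
    intro y
    refine ⟨((g⁻¹ : GL (Fin k) F) : Matrix (Fin k) (Fin k) F).mulVec y, ?_⟩
    have hg : ((g : Matrix (Fin k) (Fin k) F)) * ((g : Matrix (Fin k) (Fin k) F))⁻¹ = 1 := by
      rw [← Matrix.coe_units_inv]; exact g.mul_inv
    simp [Matrix.mulVecLin_apply, Matrix.mulVec_mulVec, hg]
  rw [this, Submodule.map_top]

lemma exists_GL_of_range_eq {m k : ℕ} {C C' : Matrix (Fin m) (Fin k) F}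
    (hC : Function.Injective C.mulVecLin) (hC' : Function.Injective C'.mulVecLin)
    (h : LinearMap.range C'.mulVecLin = LinearMap.range C.mulVecLin) :
    ∃ g : GL (Fin k) F, C * (g : Matrix (Fin k) (Fin k) F) = C' := by
  let eC := LinearEquiv.ofInjective C.mulVecLin hC
  let eC' := LinearEquiv.ofInjective C'.mulVecLin hC'
  let e : (Fin k → F) ≃ₗ[F] (Fin k → F) :=
    eC'.trans ((LinearEquiv.ofEq _ _ h).trans eC.symm)
  have key : ∀ x, C.mulVecLin (e x) = C'.mulVecLin x := by
    intro x
    have h1 : (eC (e x) : Fin m → F) = C.mulVecLin (e x) := rfl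
    have h2 : eC (e x) = (LinearEquiv.ofEq _ _ h) (eC' x) := by
      simp only [e, LinearEquiv.trans_apply, LinearEquiv.apply_symm_apply]
    rw [← h1, h2]
    rfl
  refine ⟨⟨LinearMap.toMatrix' e.toLinearMap, LinearMap.toMatrix' e.symm.toLinearMap, ?_, ?_⟩, ?_⟩
  · rw [← LinearMap.toMatrix'_comp]
    simp
  · rw [← LinearMap.toMatrix'_comp]
    simp
  · apply mulVecLin_matrix_inj
    rw [Matrix.mulVecLin_mul]
    have hm : (LinearMap.toMatrix' e.toLinearMap).mulVecLin = e.toLinearMap := by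
      rw [← Matrix.toLin'_apply', Matrix.toLin'_toMatrix']
    rw [hm]
    exact LinearMap.ext key

lemma rank_eq_iff_inj {m k : ℕ} (C : Matrix (Fin m) (Fin k) F) :
    C.rank = k ↔ Function.Injective C.mulVecLin := by
  have h := LinearMap.finrank_range_add_finrank_ker C.mulVecLin
  simp only [Module.finrank_fintype_fun_eq_card, Fintype.card_fin] at h
  rw [Matrix.rank, ← LinearMap.ker_eq_bot, ← Submodule.finrank_eq_zero]
  omega

lemma exists_matrix_of_submodule {m k : ℕ} (W : Submodule F (Fin m → F))
    (hW : Module.finrank F ↥W = k) :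
    ∃ C : Matrix (Fin m) (Fin k) F, LinearMap.range C.mulVecLin = W := by
  let b : Module.Basis (Fin k) F ↥W := Module.finBasisOfFinrankEq F ↥W hW
  refine ⟨(Matrix.of (fun x i => (b i : Fin m → F) x)), ?_⟩
  rw [Matrix.range_mulVecLin]
  have him : Set.range ((Matrix.of (fun x i => (b i : Fin m → F) x))ᵀ)
      = W.subtype '' (Set.range b) := by
    ext v
    constructor
    · rintro ⟨i, rfl⟩; exact ⟨b i, Set.mem_range_self i, rfl⟩
    · rintro ⟨w, ⟨i, rfl⟩, rfl⟩; exact ⟨i, rfl⟩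
  change Submodule.span F (Set.range ((Matrix.of (fun x i => (b i : Fin m → F) x))ᵀ)) = W
  rw [him, ← Submodule.map_span, b.span_eq, Submodule.map_top, Submodule.range_subtype]

lemma rank_of_range_eq {m k : ℕ} (C : Matrix (Fin m) (Fin k) F) (W : Submodule F (Fin m → F))
    (h : LinearMap.range C.mulVecLin = W) (hW : Module.finrank F ↥W = k) :
    C.rank = k := by
  rw [Matrix.rank, h, hW]

lemma ocard_pos {k : ℕ} (V' : Matrix (Fin k) (Fin k) F) :
    0 < Nat.card {G : GL (Fin k) F //
      (G : Matrix (Fin k) (Fin k) F)ᵀ * V' * (G : Matrix (Fin k) (Fin k) F) = V'} := by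
  have : Nonempty {G : GL (Fin k) F //
      (G : Matrix (Fin k) (Fin k) F)ᵀ * V' * (G : Matrix (Fin k) (Fin k) F) = V'} :=
    ⟨⟨1, by simp⟩⟩
  exact Nat.card_pos

lemma congr_mul_eq {m k l : ℕ} (V : Matrix (Fin m) (Fin m) F) (C : Matrix (Fin m) (Fin k) F)
    (g : Matrix (Fin k) (Fin l) F) :
    (C * g)ᵀ * V * (C * g) = gᵀ * (Cᵀ * V * C) * g := by
  simp [Matrix.transpose_mul, Matrix.mul_assoc]

lemma card_submodule_dim (M : Type*) [AddCommGroup M] [Module F M] [Finite M]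
    (d : ℕ) (hd : d ≤ Module.finrank F M) :
    ∏ i ∈ Finset.range d, (Fintype.card F ^ (Module.finrank F M) - Fintype.card F ^ i)
      = Nat.card {W : Submodule F M // Module.finrank F ↥W = d} *
        ∏ i ∈ Finset.range d, (Fintype.card F ^ d - Fintype.card F ^ i) := by
  classical
  have hLI : Nat.card { s : Fin d → M // LinearIndependent F s }
      = ∏ i ∈ Finset.range d, (Fintype.card F ^ (Module.finrank F M) - Fintype.card F ^ i) := by
    rw [card_linearIndependent hd]
    exact Fin.prod_univ_eq_prod_range
      (fun i => Fintype.card F ^ Module.finrank F M - Fintype.card F ^ i) d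
  rw [← hLI]
  refine nat_card_eq_mul_of_fiber
    (fun v => (⟨Submodule.span F (Set.range v.1), by
      simpa using finrank_span_eq_card v.2⟩ : {W : Submodule F M // Module.finrank F ↥W = d}))
    _ (fun Wh => ?_)
  obtain ⟨W, hW⟩ := Wh
  have hcard : Nat.card { u : Fin d → ↥W // LinearIndependent F u }
      = ∏ i ∈ Finset.range d, (Fintype.card F ^ d - Fintype.card F ^ i) := by
    rw [card_linearIndependent (le_of_eq hW.symm), hW]
    exact Fin.prod_univ_eq_prod_range
      (fun i => Fintype.card F ^ d - Fintype.card F ^ i) d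
  rw [← hcard]
  have key : ∀ (u : {u : Fin d → ↥W // LinearIndependent F u}),
      Submodule.span F (Set.range fun i => ((u.1 i : M))) = W := by
    intro u
    have hspan : Submodule.span F (Set.range u.1) = ⊤ :=
      u.2.span_eq_top_of_card_eq_finrank' (by simp [hW])
    have him : (Set.range fun i => ((u.1 i : M))) = W.subtype '' (Set.range u.1) := by
      ext x; simp
    rw [him, ← Submodule.map_span, hspan, Submodule.map_top, Submodule.range_subtype]
  refine Nat.card_congr (Equiv.ofBijective (fun u =>
    ⟨⟨fun i => (u.1 i : M), u.2.map' W.subtype W.ker_subtype⟩,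
      Subtype.ext (key u)⟩) ⟨?_, ?_⟩).symm
  · intro u u' h
    apply Subtype.ext
    funext i
    apply Subtype.ext
    have := congrArg (fun z => (z.1 : Fin d → M) i) h
    exact this
  · rintro ⟨⟨v, hv⟩, hsp⟩
    have hsp' : Submodule.span F (Set.range v) = W := congrArg Subtype.val hsp
    refine ⟨⟨fun i => ⟨v i, ?_⟩, ?_⟩, ?_⟩
    · rw [← hsp']; exact Submodule.subset_span (Set.mem_range_self i)
    · exact (hv.of_comp W.subtype)
    · apply Subtype.ext; apply Subtype.ext; rfl

lemma finrank_comap_mkQ {M : Type*} [AddCommGroup M] [Module F M] [FiniteDimensional F M]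
    (Λ : Submodule F M) (W' : Submodule F (M ⧸ Λ)) :
    Module.finrank F ↥(Submodule.comap Λ.mkQ W') = Module.finrank F ↥W' + Module.finrank F ↥Λ := by
  set K := Submodule.comap Λ.mkQ W'
  have hle : Λ ≤ K := by
    intro x hx
    simp only [K, Submodule.mem_comap, Submodule.mkQ_apply]
    rw [(Submodule.Quotient.mk_eq_zero Λ).2 hx]
    exact W'.zero_mem
  set f : ↥K →ₗ[F] M ⧸ Λ := Λ.mkQ.comp K.subtype
  have hrange : LinearMap.range f = W' := by
    rw [LinearMap.range_comp, Submodule.range_subtype]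
    exact Submodule.map_comap_eq_of_surjective (Submodule.mkQ_surjective Λ) W'
  have hker : LinearMap.ker f = Submodule.comap K.subtype Λ := by
    rw [LinearMap.ker_comp, Submodule.ker_mkQ]
  have h := LinearMap.finrank_range_add_finrank_ker f
  rw [hrange, hker] at h
  rw [← h, (Submodule.comapSubtypeEquivOfLe hle).finrank_eq]

lemma card_sub {m a j' : ℕ} (haj : a ≤ j') (hj : j' ≤ m)
    (Λ : Submodule F (Fin m → F)) (hΛ : Module.finrank F ↥Λ = a) :
    Nat.card {W : Submodule F (Fin m → F) // Module.finrank F ↥W = j' ∧ Λ ≤ W}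
      = Nat.card {W : Submodule F (Fin (m - a) → F) // Module.finrank F ↥W = j' - a} := by
  have hm : Module.finrank F (Fin m → F) = m := by
    simp [Module.finrank_fintype_fun_eq_card]
  have hq : Module.finrank F (((Fin m → F)) ⧸ Λ) = m - a := by
    have := Submodule.finrank_quotient_add_finrank Λ
    rw [hΛ, hm] at this
    omega
  -- step 1: to quotient submodules
  have e1 : Nat.card {W : Submodule F (Fin m → F) // Module.finrank F ↥W = j' ∧ Λ ≤ W}
      = Nat.card {W' : Submodule F ((Fin m → F) ⧸ Λ) // Module.finrank F ↥W' = j' - a} := by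
    have p1 : ∀ (W' : {W' : Submodule F ((Fin m → F) ⧸ Λ) // Module.finrank F ↥W' = j' - a}),
        Module.finrank F ↥(Submodule.comap Λ.mkQ W'.1) = j' := by
      intro W'
      rw [finrank_comap_mkQ, W'.2, hΛ]; omega
    have p2 : ∀ (W' : {W' : Submodule F ((Fin m → F) ⧸ Λ) // Module.finrank F ↥W' = j' - a}),
        Λ ≤ Submodule.comap Λ.mkQ W'.1 := by
      intro W' x hx
      simp only [Submodule.mem_comap, Submodule.mkQ_apply]
      rw [(Submodule.Quotient.mk_eq_zero Λ).2 hx]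
      exact W'.1.zero_mem
    refine (Nat.card_congr (Equiv.ofBijective
      (fun W' => ⟨Submodule.comap Λ.mkQ W'.1, p1 W', p2 W'⟩) ⟨?_, ?_⟩)).symm
    · intro x y h
      apply Subtype.ext
      exact Submodule.comap_injective_of_surjective (Submodule.mkQ_surjective Λ)
        (congrArg Subtype.val h)
    · rintro ⟨W, hfr, hle⟩
      have hcm : Submodule.comap Λ.mkQ (Submodule.map Λ.mkQ W) = W := by
        rw [Submodule.comap_map_mkQ]
        exact sup_eq_right.mpr hle
      have hfr' : Module.finrank F ↥(Submodule.map Λ.mkQ W) = j' - a := by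
        have := finrank_comap_mkQ Λ (Submodule.map Λ.mkQ W)
        rw [hcm, hfr, hΛ] at this
        omega
      exact ⟨⟨Submodule.map Λ.mkQ W, hfr'⟩, Subtype.ext hcm⟩
  -- step 2: transport along a linear equivalence
  have hm' : Module.finrank F (Fin (m - a) → F) = m - a := by
    simp [Module.finrank_fintype_fun_eq_card]
  have e : ((Fin m → F) ⧸ Λ) ≃ₗ[F] (Fin (m - a) → F) :=
    LinearEquiv.ofFinrankEq _ _ (by rw [hq, hm'])
  rw [e1]
  refine Nat.card_congr (Equiv.subtypeEquiv (Submodule.orderIsoMapComap e).toEquiv ?_)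
  intro W'
  show Module.finrank F ↥W' = j' - a ↔ Module.finrank F ↥(Submodule.map (e : ((Fin m → F) ⧸ Λ) →ₗ[F] (Fin (m - a) → F)) W') = j' - a
  rw [LinearEquiv.finrank_map_eq e W']

lemma card_fiber_colspace {m k : ℕ} (V : Matrix (Fin m) (Fin m) F)
    (V' : Matrix (Fin k) (Fin k) F) (W : Submodule F (Fin m → F))
    (hW : Module.finrank F ↥W = k) (C0 : Matrix (Fin m) (Fin k) F)
    (hC0r : LinearMap.range C0.mulVecLin = W) (hC0V : C0ᵀ * V * C0 = V') :
    Nat.card {C : Matrix (Fin m) (Fin k) F // Cᵀ * V * C = V' ∧ LinearMap.range C.mulVecLin = W}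
      = Nat.card {G : GL (Fin k) F //
          (G : Matrix (Fin k) (Fin k) F)ᵀ * V' * (G : Matrix (Fin k) (Fin k) F) = V'} := by
  have hC0inj : Function.Injective C0.mulVecLin :=
    (rank_eq_iff_inj C0).1 (rank_of_range_eq _ _ hC0r hW)
  have key : ∀ (G : {G : GL (Fin k) F //
      (G : Matrix (Fin k) (Fin k) F)ᵀ * V' * (G : Matrix (Fin k) (Fin k) F) = V'}),
      (C0 * (G.1 : Matrix (Fin k) (Fin k) F))ᵀ * V * (C0 * (G.1 : Matrix (Fin k) (Fin k) F)) = V'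
        ∧ LinearMap.range (C0 * (G.1 : Matrix (Fin k) (Fin k) F)).mulVecLin = W := by
    intro G
    refine ⟨?_, by rw [range_mul_GL, hC0r]⟩
    rw [congr_mul_eq, hC0V]
    exact G.2
  refine (Nat.card_congr (Equiv.ofBijective (fun G => ⟨_, key G⟩) ⟨?_, ?_⟩)).symm
  · intro G G' h
    have h2 : C0 * (G.1 : Matrix (Fin k) (Fin k) F) = C0 * (G'.1 : Matrix (Fin k) (Fin k) F) :=
      congrArg Subtype.val h
    exact Subtype.ext (Units.ext (left_cancel hC0inj h2))
  · rintro ⟨C, hCV, hCr⟩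
    have hCinj : Function.Injective C.mulVecLin :=
      (rank_eq_iff_inj C).1 (rank_of_range_eq _ _ hCr hW)
    obtain ⟨g, hg⟩ := exists_GL_of_range_eq hC0inj hCinj (by rw [hCr, hC0r])
    have hgV : (g : Matrix (Fin k) (Fin k) F)ᵀ * V' * (g : Matrix (Fin k) (Fin k) F) = V' := by
      have h3 := congr_mul_eq V C0 (g : Matrix (Fin k) (Fin k) F)
      rw [hg, hC0V] at h3
      rw [← h3]
      exact hCV
    exact ⟨⟨g, hgV⟩, Subtype.ext hg⟩

lemma lemA {m j' a : ℕ} (V : Matrix (Fin m) (Fin m) F) (V' : Matrix (Fin j') (Fin j') F)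
    (U : Matrix (Fin a) (Fin a) F) :
    Nat.card {C : Matrix (Fin m) (Fin j') F // Cᵀ * V * C = V' ∧ C.rank = j'} *
      Nat.card {D : Matrix (Fin j') (Fin a) F // Dᵀ * V' * D = U ∧ D.rank = a}
    = Nat.card {G : GL (Fin j') F //
        (G : Matrix (Fin j') (Fin j') F)ᵀ * V' * (G : Matrix (Fin j') (Fin j') F) = V'} *
      Nat.card {p : Matrix (Fin m) (Fin a) F × Submodule F (Fin m → F) //
        (p.1ᵀ * V * p.1 = U ∧ p.1.rank = a) ∧ Module.finrank F ↥p.2 = j' ∧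
          LinearMap.range p.1.mulVecLin ≤ p.2 ∧
          ∃ C : Matrix (Fin m) (Fin j') F,
            LinearMap.range C.mulVecLin = p.2 ∧ Cᵀ * V * C = V'} := by
  rw [← Nat.card_prod]
  -- Step 1: the product is equivalent to the flattened pair type T'
  have e1 : Nat.card ({C : Matrix (Fin m) (Fin j') F // Cᵀ * V * C = V' ∧ C.rank = j'} ×
      {D : Matrix (Fin j') (Fin a) F // Dᵀ * V' * D = U ∧ D.rank = a})
      = Nat.card {p : Matrix (Fin m) (Fin a) F × Matrix (Fin m) (Fin j') F //
          (p.1ᵀ * V * p.1 = U ∧ p.1.rank = a) ∧ p.2ᵀ * V * p.2 = V' ∧ p.2.rank = j' ∧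
            LinearMap.range p.1.mulVecLin ≤ LinearMap.range p.2.mulVecLin} := by
    have key : ∀ (x : {C : Matrix (Fin m) (Fin j') F // Cᵀ * V * C = V' ∧ C.rank = j'} ×
        {D : Matrix (Fin j') (Fin a) F // Dᵀ * V' * D = U ∧ D.rank = a}),
        ((x.1.1 * x.2.1)ᵀ * V * (x.1.1 * x.2.1) = U ∧ (x.1.1 * x.2.1).rank = a) ∧
          x.1.1ᵀ * V * x.1.1 = V' ∧ x.1.1.rank = j' ∧
          LinearMap.range (x.1.1 * x.2.1).mulVecLin ≤ LinearMap.range x.1.1.mulVecLin := by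
      rintro ⟨⟨C, hCV, hCr⟩, ⟨D, hDV, hDr⟩⟩
      have hCinj : Function.Injective C.mulVecLin := (rank_eq_iff_inj C).1 hCr
      dsimp only
      refine ⟨⟨?_, ?_⟩, hCV, hCr, ?_⟩
      · rw [congr_mul_eq, hCV, hDV]
      · rw [rank_mul_of_inj C D hCinj, hDr]
      · rw [Matrix.mulVecLin_mul]
        exact LinearMap.range_comp_le_range _ _
    refine Nat.card_congr (Equiv.ofBijective (fun x => ⟨(x.1.1 * x.2.1, x.1.1), key x⟩)
      ⟨?_, ?_⟩)
    · rintro ⟨⟨C, hC⟩, ⟨D, hD⟩⟩ ⟨⟨C', hC'⟩, ⟨D', hD'⟩⟩ h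
      have h1 : C * D = C' * D' := congrArg (fun z => z.1.1) h
      have h2 : C = C' := congrArg (fun z => z.1.2) h
      subst h2
      have h3 : D = D' := left_cancel ((rank_eq_iff_inj C).1 hC.2) h1
      subst h3
      rfl
    · rintro ⟨⟨B, C⟩, ⟨hBU, hBr⟩, hCV, hCr, hle⟩
      have hCinj : Function.Injective C.mulVecLin := (rank_eq_iff_inj C).1 hCr
      obtain ⟨D, hD⟩ := exists_factor C B hle
      have hDV : Dᵀ * V' * D = U := by
        have h4 := congr_mul_eq V C D
        rw [hD, hCV] at h4
        rw [← h4]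
        exact hBU
      have hDr : D.rank = a := by
        have := rank_mul_of_inj C D hCinj
        rw [hD, hBr] at this
        exact this.symm
      exact ⟨(⟨C, hCV, hCr⟩, ⟨D, hDV, hDr⟩), Subtype.ext (Prod.ext hD rfl)⟩
  rw [e1, mul_comm]
  refine nat_card_eq_mul_of_fiber (fun x =>
    (⟨(x.1.1, LinearMap.range x.1.2.mulVecLin), x.2.1, by rw [← Matrix.rank]; exact x.2.2.2.1,
      x.2.2.2.2, x.1.2, rfl, x.2.2.1⟩ :
      {p : Matrix (Fin m) (Fin a) F × Submodule F (Fin m → F) //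
        (p.1ᵀ * V * p.1 = U ∧ p.1.rank = a) ∧ Module.finrank F ↥p.2 = j' ∧
          LinearMap.range p.1.mulVecLin ≤ p.2 ∧
          ∃ C : Matrix (Fin m) (Fin j') F,
            LinearMap.range C.mulVecLin = p.2 ∧ Cᵀ * V * C = V'})) _ (fun y => ?_)
  obtain ⟨⟨B, W⟩, ⟨hBU, hBr⟩, hWfr, hBle, C0, hC0r, hC0V⟩ := y
  simp only at hBU hBr hWfr hBle
  have hiff : ∀ (x : {p : Matrix (Fin m) (Fin a) F × Matrix (Fin m) (Fin j') F //
      (p.1ᵀ * V * p.1 = U ∧ p.1.rank = a) ∧ p.2ᵀ * V * p.2 = V' ∧ p.2.rank = j' ∧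
        LinearMap.range p.1.mulVecLin ≤ LinearMap.range p.2.mulVecLin}),
      ((⟨(x.1.1, LinearMap.range x.1.2.mulVecLin), x.2.1, by rw [← Matrix.rank]; exact x.2.2.2.1,
        x.2.2.2.2, x.1.2, rfl, x.2.2.1⟩ :
        {p : Matrix (Fin m) (Fin a) F × Submodule F (Fin m → F) //
          (p.1ᵀ * V * p.1 = U ∧ p.1.rank = a) ∧ Module.finrank F ↥p.2 = j' ∧
            LinearMap.range p.1.mulVecLin ≤ p.2 ∧
            ∃ C : Matrix (Fin m) (Fin j') F,
              LinearMap.range C.mulVecLin = p.2 ∧ Cᵀ * V * C = V'})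
        = ⟨(B, W), ⟨hBU, hBr⟩, hWfr, hBle, C0, hC0r, hC0V⟩)
      ↔ (x.1.1 = B ∧ LinearMap.range x.1.2.mulVecLin = W) := by
    intro x
    rw [Subtype.ext_iff, Prod.ext_iff]
  rw [Nat.card_congr (Equiv.subtypeEquivRight hiff),
    ← card_fiber_colspace V V' W hWfr C0 hC0r hC0V]
  have key2 : ∀ (x : {x : {p : Matrix (Fin m) (Fin a) F × Matrix (Fin m) (Fin j') F //
      (p.1ᵀ * V * p.1 = U ∧ p.1.rank = a) ∧ p.2ᵀ * V * p.2 = V' ∧ p.2.rank = j' ∧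
        LinearMap.range p.1.mulVecLin ≤ LinearMap.range p.2.mulVecLin} //
      x.1.1 = B ∧ LinearMap.range x.1.2.mulVecLin = W}),
      x.1.1.2ᵀ * V * x.1.1.2 = V' ∧ LinearMap.range x.1.1.2.mulVecLin = W := by
    rintro ⟨⟨⟨B1, C1⟩, h1⟩, hb, hw⟩
    exact ⟨h1.2.1, hw⟩
  refine Nat.card_congr (Equiv.ofBijective (fun x => ⟨x.1.1.2, key2 x⟩) ⟨?_, ?_⟩)
  · rintro ⟨⟨⟨B1, C1⟩, h1⟩, hb1, hw1⟩ ⟨⟨⟨B2, C2⟩, h2⟩, hb2, hw2⟩ h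
    have hC : C1 = C2 := congrArg Subtype.val h
    simp only at hb1 hb2 hC
    subst hC
    have hB : B1 = B2 := hb1.trans hb2.symm
    subst hB
    rfl
  · rintro ⟨C, hCV, hCr⟩
    have hCrank : C.rank = j' := rank_of_range_eq C W hCr hWfr
    refine ⟨⟨⟨(B, C), ⟨hBU, hBr⟩, hCV, hCrank, ?_⟩, rfl, hCr⟩, rfl⟩
    rw [hCr]
    exact hBle

lemma class_unique {m j' : ℕ} (V : Matrix (Fin m) (Fin m) F) (hV : Vᵀ = V)
    (R : Finset (Matrix (Fin j') (Fin j') F))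
    (hR : ∀ W : Matrix (Fin j') (Fin j') F, Wᵀ = W →
      ∃! V', V' ∈ R ∧ ∃ G : GL (Fin j') F,
        (G : Matrix (Fin j') (Fin j') F)ᵀ * W * (G : Matrix (Fin j') (Fin j') F) = V')
    (W : Submodule F (Fin m → F)) (hW : Module.finrank F ↥W = j') :
    ∃! V', V' ∈ R ∧ ∃ C : Matrix (Fin m) (Fin j') F,
      LinearMap.range C.mulVecLin = W ∧ Cᵀ * V * C = V' := by
  obtain ⟨C0, hC0r⟩ := exists_matrix_of_submodule W hW
  have hC0inj : Function.Injective C0.mulVecLin :=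
    (rank_eq_iff_inj C0).1 (rank_of_range_eq _ _ hC0r hW)
  have hW0 : (C0ᵀ * V * C0)ᵀ = C0ᵀ * V * C0 := by
    rw [Matrix.transpose_mul, Matrix.transpose_mul, Matrix.transpose_transpose, hV,
      Matrix.mul_assoc]
  obtain ⟨V'0, ⟨hV'0R, g0, hg0⟩, huniq⟩ := hR (C0ᵀ * V * C0) hW0
  refine ⟨V'0, ⟨hV'0R, C0 * (g0 : Matrix (Fin j') (Fin j') F), ?_, ?_⟩, ?_⟩
  · rw [range_mul_GL, hC0r]
  · rw [congr_mul_eq]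
    exact hg0
  · rintro V'' ⟨hV''R, C', hC'r, hC'V⟩
    have hC'inj : Function.Injective C'.mulVecLin :=
      (rank_eq_iff_inj C').1 (rank_of_range_eq _ _ hC'r hW)
    obtain ⟨g, hg⟩ := exists_GL_of_range_eq hC0inj hC'inj (by rw [hC'r, hC0r])
    refine huniq V'' ⟨hV''R, g, ?_⟩
    rw [← congr_mul_eq, hg]
    exact hC'V

lemma lemB {m j' a : ℕ} (V : Matrix (Fin m) (Fin m) F) (hV : Vᵀ = V)
    (U : Matrix (Fin a) (Fin a) F)
    (R : Finset (Matrix (Fin j') (Fin j') F))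
    (hR : ∀ W : Matrix (Fin j') (Fin j') F, Wᵀ = W →
      ∃! V', V' ∈ R ∧ ∃ G : GL (Fin j') F,
        (G : Matrix (Fin j') (Fin j') F)ᵀ * W * (G : Matrix (Fin j') (Fin j') F) = V') :
    ∑ V' ∈ R, Nat.card {p : Matrix (Fin m) (Fin a) F × Submodule F (Fin m → F) //
        (p.1ᵀ * V * p.1 = U ∧ p.1.rank = a) ∧ Module.finrank F ↥p.2 = j' ∧
          LinearMap.range p.1.mulVecLin ≤ p.2 ∧
          ∃ C : Matrix (Fin m) (Fin j') F,
            LinearMap.range C.mulVecLin = p.2 ∧ Cᵀ * V * C = V'}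
      = Nat.card {p : Matrix (Fin m) (Fin a) F × Submodule F (Fin m → F) //
        (p.1ᵀ * V * p.1 = U ∧ p.1.rank = a) ∧ Module.finrank F ↥p.2 = j' ∧
          LinearMap.range p.1.mulVecLin ≤ p.2} := by
  classical
  -- classification function
  have main := fun (W : Submodule F (Fin m → F)) (hW : Module.finrank F ↥W = j') =>
    class_unique V hV R hR W hW
  set T := {p : Matrix (Fin m) (Fin a) F × Submodule F (Fin m → F) //
    (p.1ᵀ * V * p.1 = U ∧ p.1.rank = a) ∧ Module.finrank F ↥p.2 = j' ∧
      LinearMap.range p.1.mulVecLin ≤ p.2} with hT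
  let cls : T → {V' : Matrix (Fin j') (Fin j') F // V' ∈ R} := fun x =>
    ⟨Classical.choose (main x.1.2 x.2.2.1),
      (Classical.choose_spec (main x.1.2 x.2.2.1)).1.1⟩
  have cls_spec : ∀ x : T, ∃ C : Matrix (Fin m) (Fin j') F,
      LinearMap.range C.mulVecLin = x.1.2 ∧ Cᵀ * V * C = (cls x).1 :=
    fun x => (Classical.choose_spec (main x.1.2 x.2.2.1)).1.2
  have cls_uniq : ∀ (x : T) (V'' : Matrix (Fin j') (Fin j') F), V'' ∈ R →
      (∃ C : Matrix (Fin m) (Fin j') F,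
        LinearMap.range C.mulVecLin = x.1.2 ∧ Cᵀ * V * C = V'') → (cls x).1 = V'' := by
    intro x V'' hmem hex
    exact ((main x.1.2 x.2.2.1).unique ⟨(cls x).2, cls_spec x⟩ ⟨hmem, hex⟩)
  rw [nat_card_eq_sum_fibers cls, ← Finset.sum_coe_sort R]
  refine Finset.sum_congr rfl (fun b _ => ?_)
  refine (Nat.card_congr (Equiv.ofBijective
    (fun x => ⟨x.1.1, x.1.2.1, x.1.2.2.1, x.1.2.2.2, by
      obtain ⟨C, hC1, hC2⟩ := cls_spec x.1
      exact ⟨C, hC1, by rw [hC2]; exact congrArg Subtype.val x.2⟩⟩) ⟨?_, ?_⟩)).symm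
  · rintro ⟨⟨p1, h1⟩, hf1⟩ ⟨⟨p2, h2⟩, hf2⟩ h
    have : p1 = p2 := congrArg Subtype.val h
    subst this
    rfl
  · rintro ⟨p, hp1, hpfr, hple, C, hCr, hCV⟩
    refine ⟨⟨⟨p, hp1, hpfr, hple⟩, ?_⟩, rfl⟩
    exact Subtype.ext (cls_uniq _ b.1 b.2 ⟨C, hCr, hCV⟩)

lemma lemC {m j' a : ℕ} (haj : a ≤ j') (hj : j' ≤ m)
    (V : Matrix (Fin m) (Fin m) F) (U : Matrix (Fin a) (Fin a) F) :
    Nat.card {p : Matrix (Fin m) (Fin a) F × Submodule F (Fin m → F) //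
        (p.1ᵀ * V * p.1 = U ∧ p.1.rank = a) ∧ Module.finrank F ↥p.2 = j' ∧
          LinearMap.range p.1.mulVecLin ≤ p.2}
      = Nat.card {B : Matrix (Fin m) (Fin a) F // Bᵀ * V * B = U ∧ B.rank = a} *
        Nat.card {W : Submodule F (Fin (m - a) → F) // Module.finrank F ↥W = j' - a} := by
  refine nat_card_eq_mul_of_fiber (fun x => ⟨x.1.1, x.2.1⟩) _ (fun b => ?_)
  obtain ⟨B, hBU, hBr⟩ := b
  have hΛ : Module.finrank F ↥(LinearMap.range B.mulVecLin) = a := by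
    rw [← Matrix.rank]; exact hBr
  rw [← card_sub haj hj (LinearMap.range B.mulVecLin) hΛ]
  refine Nat.card_congr (Equiv.ofBijective (fun x => ⟨x.1.1.2, x.1.2.2.1, by
    have hB : x.1.1.1 = B := congrArg Subtype.val x.2
    have h22 := x.1.2.2.2
    rw [hB] at h22
    exact h22⟩) ⟨?_, ?_⟩)
  · rintro ⟨⟨⟨B1, W1⟩, h1⟩, hf1⟩ ⟨⟨⟨B2, W2⟩, h2⟩, hf2⟩ h
    have hW : W1 = W2 := congrArg Subtype.val h
    have hB1 : B1 = B := congrArg Subtype.val hf1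
    have hB2 : B2 = B := congrArg Subtype.val hf2
    subst hW
    have : B1 = B2 := hB1.trans hB2.symm
    subst this
    rfl
  · rintro ⟨W, hWfr, hWle⟩
    exact ⟨⟨⟨(B, W), ⟨hBU, hBr⟩, hWfr, hWle⟩, rfl⟩, rfl⟩

lemma NN_eq_gauss {m' d : ℕ} (hd : d ≤ m') :
    ((Nat.card {W : Submodule F (Fin m' → F) // Module.finrank F ↥W = d} : ℚ))
      = gaussBinom (Fintype.card F) m' d := by
  set q := Fintype.card F with hqdef
  have hq : 1 < q := Fintype.one_lt_card
  have hm : Module.finrank F (Fin m' → F) = m' := by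
    simp [Module.finrank_fintype_fun_eq_card]
  have h := card_submodule_dim (F := F) (Fin m' → F) d (by rw [hm]; exact hd)
  rw [hm] at h
  have hq0 : (q : ℚ) ≠ 0 := by positivity
  have hq1 : (1 : ℚ) < (q : ℚ) := by exact_mod_cast hq
  have hcast2 : ((∏ i ∈ Finset.range d, (q ^ m' - q ^ i) : ℕ) : ℚ)
      = ∏ i ∈ Finset.range d, ((q : ℚ) ^ m' - (q : ℚ) ^ i) := by
    rw [Nat.cast_prod]
    refine Finset.prod_congr rfl (fun i hi => ?_)
    have hile : i ≤ m' := le_trans (le_of_lt (Finset.mem_range.1 hi)) hd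
    rw [Nat.cast_sub (Nat.pow_le_pow_right (le_of_lt hq) hile)]
    push_cast
    ring
  have hcast1 : ((∏ i ∈ Finset.range d, (q ^ d - q ^ i) : ℕ) : ℚ)
      = ∏ i ∈ Finset.range d, ((q : ℚ) ^ d - (q : ℚ) ^ i) := by
    rw [Nat.cast_prod]
    refine Finset.prod_congr rfl (fun i hi => ?_)
    have hile : i ≤ d := le_of_lt (Finset.mem_range.1 hi)
    rw [Nat.cast_sub (Nat.pow_le_pow_right (le_of_lt hq) hile)]
    push_cast
    ring
  have hP1ne : (∏ i ∈ Finset.range d, ((q : ℚ) ^ d - (q : ℚ) ^ i)) ≠ 0 := by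
    refine Finset.prod_ne_zero_iff.2 (fun i hi => ?_)
    have : (q : ℚ) ^ i < (q : ℚ) ^ d := by
      exact pow_lt_pow_right₀ hq1 (Finset.mem_range.1 hi)
    exact sub_ne_zero.2 (ne_of_gt this)
  have hgauss : gaussBinom q m' d
      = (∏ i ∈ Finset.range d, ((q : ℚ) ^ m' - (q : ℚ) ^ i)) /
        (∏ i ∈ Finset.range d, ((q : ℚ) ^ d - (q : ℚ) ^ i)) := by
    rw [gaussBinom, ← Finset.prod_div_distrib]
    refine Finset.prod_congr rfl (fun i hi => ?_)
    have hid : i < d := Finset.mem_range.1 hi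
    have e1 : (q : ℚ) ^ m' = (q : ℚ) ^ i * (q : ℚ) ^ (m' - i) := by
      rw [← pow_add]; congr 1; omega
    have e2 : (q : ℚ) ^ d = (q : ℚ) ^ i * (q : ℚ) ^ (d - i) := by
      rw [← pow_add]; congr 1; omega
    rw [e1, e2]
    rw [show (q : ℚ) ^ i * (q : ℚ) ^ (m' - i) - (q : ℚ) ^ i
        = (q : ℚ) ^ i * ((q : ℚ) ^ (m' - i) - 1) by ring,
      show (q : ℚ) ^ i * (q : ℚ) ^ (d - i) - (q : ℚ) ^ i
        = (q : ℚ) ^ i * ((q : ℚ) ^ (d - i) - 1) by ring,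
      mul_div_mul_left _ _ (pow_ne_zero i hq0)]
  rw [hgauss, eq_div_iff hP1ne]
  have := congrArg (fun x : ℕ => (x : ℚ)) h
  simp only [Nat.cast_mul] at this
  rw [hcast2, hcast1] at this
  rw [← this]

end FlagAux

/-- Flag-counting identity: `β(n−r−a, j'−a)·R*(V,U) = Σ_{cls V'} R*(V,V')·R*(V',U)`,
obtained by counting flags `Λ₁ ⊆ Ω₁' ⊆ Ω₁` with `dim Λ₁ = a`, `dim Ω₁' = j'` two ways. -/
theorem flag_counting_identity
    (F : Type*) [Field F] [Fintype F] [DecidableEq F] (hq : Odd (Fintype.card F))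
    (n r a j' : ℕ) (haj : a ≤ j') (hj : j' ≤ n - r)
    (V : Matrix (Fin (n - r)) (Fin (n - r)) F) (hV : Vᵀ = V)
    (U : Matrix (Fin a) (Fin a) F) (hU : Uᵀ = U)
    (R : Finset (Matrix (Fin j') (Fin j') F))
    (hRsymm : ∀ W ∈ R, Wᵀ = W)
    (hR : ∀ W : Matrix (Fin j') (Fin j') F, Wᵀ = W →
      ∃! V', V' ∈ R ∧ ∃ G : GL (Fin j') F,
        (G : Matrix (Fin j') (Fin j') F)ᵀ * W * (G : Matrix (Fin j') (Fin j') F) = V') :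
    gaussBinom (Fintype.card F) (n - r - a) (j' - a) * Rstar V U
      = ∑ V' ∈ R, Rstar V V' * Rstar V' U := by
  classical
  have hd : j' - a ≤ n - r - a := by omega
  have hoU : ((Nat.card {G : GL (Fin a) F //
      (G : Matrix (Fin a) (Fin a) F)ᵀ * U * (G : Matrix (Fin a) (Fin a) F) = U} : ℕ) : ℚ) ≠ 0 :=
    Nat.cast_ne_zero.2 (ocard_pos U).ne'
  have step1 : ∀ V' ∈ R, Rstar V V' * Rstar V' U
      = ((Nat.card {p : Matrix (Fin (n - r)) (Fin a) F × Submodule F (Fin (n - r) → F) //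
          (p.1ᵀ * V * p.1 = U ∧ p.1.rank = a) ∧ Module.finrank F ↥p.2 = j' ∧
            LinearMap.range p.1.mulVecLin ≤ p.2 ∧
            ∃ C : Matrix (Fin (n - r)) (Fin j') F,
              LinearMap.range C.mulVecLin = p.2 ∧ Cᵀ * V * C = V'} : ℕ) : ℚ) /
        ((Nat.card {G : GL (Fin a) F //
          (G : Matrix (Fin a) (Fin a) F)ᵀ * U * (G : Matrix (Fin a) (Fin a) F) = U} : ℕ) : ℚ) := by
    intro V' hV'
    have hoV' : ((Nat.card {G : GL (Fin j') F //
        (G : Matrix (Fin j') (Fin j') F)ᵀ * V' * (G : Matrix (Fin j') (Fin j') F) = V'} : ℕ) : ℚ) ≠ 0 :=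
      Nat.cast_ne_zero.2 (ocard_pos V').ne'
    rw [Rstar, Rstar, rstar, rstar, div_mul_div_comm, ← Nat.cast_mul, lemA V V' U,
      Nat.cast_mul, mul_div_mul_left _ _ hoV']
  rw [Finset.sum_congr rfl step1, ← Finset.sum_div, ← Nat.cast_sum,
    lemB V hV U R hR, lemC haj hj V U]
  rw [Rstar, rstar]
  rw [show gaussBinom (Fintype.card F) (n - r - a) (j' - a)
      = ((Nat.card {W : Submodule F (Fin (n - r - a) → F) //
          Module.finrank F ↥W = j' - a} : ℕ) : ℚ) from (NN_eq_gauss hd).symm]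
  push_cast
  ring
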